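/- Suppose pullbacks along M-morphisms exist in K and every object of K has an M-minimization. Then the full subcategory K_min of M-minimal objects is coreflective in K: the inclusion J : K_min → K has a right adjoint R sending each object to its M-minimization. -/

import Mathlib

open CategoryTheory CategoryTheory.Limits

universe v u

/-- An (E,M)-factorization system on a category. -/
structure FactorizationSystem (K : Type u) [Category.{v} K] : Type (max u (v+1)) where
  E : MorphismProperty K
  M : MorphismProperty K
  E_comp_iso : ∀ {X Y Z : K} (e : X ⟶ Y) (i : Y ⟶ Z), IsIso i → E e → E (e ≫ i)
  iso_comp_E : ∀ {X Y Z : K} (i : X ⟶ Y) (e : Y ⟶ Z), IsIso i → E e → E (i ≫ e)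
  M_comp_iso : ∀ {X Y Z : K} (m : X ⟶ Y) (i : Y ⟶ Z), IsIso i → M m → M (m ≫ i)
  iso_comp_M : ∀ {X Y Z : K} (i : X ⟶ Y) (m : Y ⟶ Z), IsIso i → M m → M (i ≫ m)
  factor : ∀ {X Y : K} (f : X ⟶ Y),
      ∃ (I : K) (e : X ⟶ I) (m : I ⟶ Y), E e ∧ M m ∧ e ≫ m = f
  diagonal : ∀ {A B X Y : K} (e : A ⟶ B) (f : A ⟶ X) (g : B ⟶ Y) (m : X ⟶ Y),
      E e → M m → e ≫ g = f ≫ m → ∃! d : B ⟶ X, e ≫ d = f ∧ d ≫ m = g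

/-- An object is M-minimal if every M-morphism into it is an isomorphism. -/
def MMinimal {K : Type u} [Category.{v} K] (fs : FactorizationSystem K) (C : K) : Prop :=
  ∀ {D : K} (h : D ⟶ C), fs.M h → IsIso h

/-- M is stable under pullback. -/
lemma M_pullback_stable {K : Type u} [Category.{v} K] (fs : FactorizationSystem K)
    {X Y Z : K} (f : X ⟶ Z) (m : Y ⟶ Z) (hm : fs.M m) [HasPullback f m] :
    fs.M (pullback.fst f m) := by
  obtain ⟨I, e, n, he, hn, hen⟩ := fs.factor (pullback.fst f m)
  obtain ⟨d, ⟨hd1, hd2⟩, -⟩ := fs.diagonal e (pullback.snd f m) (n ≫ f) m he hm (by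
    rw [← Category.assoc, hen, pullback.condition])
  let u : I ⟶ pullback f m := pullback.lift n d (by rw [hd2])
  have hue : e ≫ u = 𝟙 _ := by
    apply pullback.hom_ext
    · simp [u, hen]
      rw [pullback.lift_fst, hen]
    · simp [u, hd1]
      rw [pullback.lift_snd, hd1]
  have heu : u ≫ e = 𝟙 I := by
    obtain ⟨d', -, huniq⟩ := fs.diagonal e e n n he hn rfl
    have h1 : u ≫ e = d' := huniq _ ⟨by rw [← Category.assoc, hue, Category.id_comp],
      by rw [Category.assoc, hen]; simp [u]; exact pullback.lift_fst _ _ _⟩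
    have h2 : 𝟙 I = d' := huniq _ ⟨Category.comp_id e, Category.id_comp n⟩
    rw [h1, h2]
  have : IsIso e := ⟨u, hue, heu⟩
  rw [← hen]
  exact fs.iso_comp_M e n this hn

theorem minimal_coreflective {K : Type u} [Category.{v} K] (fs : FactorizationSystem K)
    (hpb : ∀ {X Y Z : K} (f : X ⟶ Z) (m : Y ⟶ Z), fs.M m → HasPullback f m)
    (hmin : ∀ C : K, ∃ (M₀ : K) (m : M₀ ⟶ C), fs.M m ∧ MMinimal fs M₀) :
    ∃ (R : K ⥤ ObjectProperty.FullSubcategory (fun X => MMinimal fs X))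
      (adj : ObjectProperty.ι (fun X => MMinimal fs X) ⊣ R),
      ∀ C : K, fs.M (adj.counit.app C) := by
  classical
  let G : K → ObjectProperty.FullSubcategory (fun X => MMinimal fs X) := fun C =>
    ⟨(hmin C).choose, (hmin C).choose_spec.choose_spec.2⟩
  let mC : ∀ C, (G C).obj ⟶ C := fun C => (hmin C).choose_spec.choose
  have hmC : ∀ C, fs.M (mC C) := fun C => (hmin C).choose_spec.choose_spec.1
  have key : ∀ (X : ObjectProperty.FullSubcategory (fun X => MMinimal fs X)) (C : K) (f : X.obj ⟶ C),
      ∃! g : X.obj ⟶ (G C).obj, g ≫ mC C = f := by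
    intro X C f
    haveI := hpb f (mC C) (hmC C)
    have hfst : fs.M (pullback.fst f (mC C)) := M_pullback_stable fs f (mC C) (hmC C)
    haveI : IsIso (pullback.fst f (mC C)) := X.property _ hfst
    refine ⟨inv (pullback.fst f (mC C)) ≫ pullback.snd f (mC C), ?_, ?_⟩
    · show (inv (pullback.fst f (mC C)) ≫ pullback.snd f (mC C)) ≫ mC C = f
      rw [Category.assoc, ← pullback.condition, IsIso.inv_hom_id_assoc]
    · intro g' hg'
      have hc : 𝟙 X.obj ≫ f = g' ≫ mC C := by simpa using hg'.symm
      have hlf : pullback.lift (𝟙 X.obj) g' hc ≫ pullback.fst f (mC C) = 𝟙 X.obj :=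
        pullback.lift_fst _ _ _
      have hu : pullback.lift (𝟙 X.obj) g' hc = inv (pullback.fst f (mC C)) := by
        rw [← Category.comp_id (pullback.lift (𝟙 X.obj) g' hc),
          ← IsIso.hom_inv_id (pullback.fst f (mC C)), ← Category.assoc, hlf,
          Category.id_comp]
      calc g' = pullback.lift (𝟙 X.obj) g' hc ≫ pullback.snd f (mC C) :=
          (pullback.lift_snd _ _ _).symm
        _ = inv (pullback.fst f (mC C)) ≫ pullback.snd f (mC C) := by rw [hu]
  let e : ∀ (X : ObjectProperty.FullSubcategory (fun X => MMinimal fs X)) (C : K),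
      ((ObjectProperty.ι (fun X => MMinimal fs X)).obj X ⟶ C) ≃ (X ⟶ G C) :=
    fun X C =>
    { toFun := fun f => ObjectProperty.homMk (key X C f).exists.choose
      invFun := fun g => g.hom ≫ mC C
      left_inv := fun f => (key X C f).exists.choose_spec
      right_inv := fun g => by
        ext
        exact (key X C (g.hom ≫ mC C)).unique (key X C (g.hom ≫ mC C)).exists.choose_spec rfl }
  have he : ∀ X' X C (f : X' ⟶ X) (g : _ ⟶ C),
      e X' C ((ObjectProperty.ι (fun X => MMinimal fs X)).map f ≫ g) =
        f ≫ e X C g := by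
    intro X' X C f g
    have h1 := (key X' C (show X'.obj ⟶ C from
      (ObjectProperty.ι (fun X => MMinimal fs X)).map f ≫ g)).exists.choose_spec
    have h2 : ((show X'.obj ⟶ X.obj from f.hom) ≫ ((e X C) g).hom) ≫ mC C =
        (show X'.obj ⟶ C from
          (ObjectProperty.ι (fun X => MMinimal fs X)).map f ≫ g) := by
      rw [Category.assoc]
      have h3 : (show X.obj ⟶ (G C).obj from ((e X C) g).hom) ≫ mC C = g :=
        (key X C g).exists.choose_spec
      rw [h3]
      rfl
    ext
    exact (key X' C _).unique h1 h2
  refine ⟨Adjunction.rightAdjointOfEquiv e he, Adjunction.adjunctionOfEquivRight e he,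
    fun C => ?_⟩
  have : (Adjunction.adjunctionOfEquivRight e he).counit.app C = mC C := by
    have h1 : ((e (G C) C).symm (𝟙 (G C)) : (G C).obj ⟶ C) = 𝟙 (G C).obj ≫ mC C := rfl
    simp only [Adjunction.adjunctionOfEquivRight_counit_app]
    rw [show ((e (G C) C).symm (𝟙 _) : (G C).obj ⟶ C) = mC C by
      rw [h1, Category.id_comp]]
  rw [this]
  exact hmC C
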